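/- The sixteen operators of form E = P⊗I⊗I⊗I⊗I, I⊗P⊗I⊗I⊗I, etc., with P ∈ {X, X²} (single bit-shift errors on any of 5 qutrits) together with the identity yield pairwise distinct syndrome vectors under the stabilizers S₃ and S₄ combined with S₁, S₂: specifically, for single-qutrit errors Xᵃ on qutrit k (a ∈ {1,2}, k ∈ {1,…,5}), the commutation phases (ε₁,ε₂,ε₃,ε₄) ∈ {1,ω,ω²}⁴ defined by SⱼE = εⱼ·E·Sⱼ are distinct for distinct (a,k), and all differ from (1,1,1,1). -/

import Mathlib

open Matrix Kronecker

noncomputable def ω : ℂ := Complex.exp (2 * Real.pi * Complex.I / 3)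

noncomputable def X : Matrix (Fin 3) (Fin 3) ℂ := !![0,0,1; 1,0,0; 0,1,0]
noncomputable def Z : Matrix (Fin 3) (Fin 3) ℂ := !![1,0,0; 0,ω,0; 0,0,ω^2]
noncomputable def Id3 : Matrix (Fin 3) (Fin 3) ℂ := 1

noncomputable def S : Fin 4 → Matrix ((((Fin 3 × Fin 3) × Fin 3) × Fin 3) × Fin 3)
    ((((Fin 3 × Fin 3) × Fin 3) × Fin 3) × Fin 3) ℂ
  | 0 => Id3 ⊗ₖ X ⊗ₖ Z ⊗ₖ Z ⊗ₖ X
  | 1 => X ⊗ₖ Id3 ⊗ₖ X ⊗ₖ Z ⊗ₖ Z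
  | 2 => Z ⊗ₖ X ⊗ₖ Id3 ⊗ₖ X ⊗ₖ Z
  | 3 => Z ⊗ₖ Z ⊗ₖ X ⊗ₖ Id3 ⊗ₖ X

/-- The error `X^(a+1)` acting on qutrit `k` of the 5-qutrit system. -/
noncomputable def E (a : Fin 2) (k : Fin 5) :
    Matrix ((((Fin 3 × Fin 3) × Fin 3) × Fin 3) × Fin 3)
      ((((Fin 3 × Fin 3) × Fin 3) × Fin 3) × Fin 3) ℂ :=
  let P := X ^ ((a : ℕ) + 1)
  match k with
  | 0 => P ⊗ₖ Id3 ⊗ₖ Id3 ⊗ₖ Id3 ⊗ₖ Id3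
  | 1 => Id3 ⊗ₖ P ⊗ₖ Id3 ⊗ₖ Id3 ⊗ₖ Id3
  | 2 => Id3 ⊗ₖ Id3 ⊗ₖ P ⊗ₖ Id3 ⊗ₖ Id3
  | 3 => Id3 ⊗ₖ Id3 ⊗ₖ Id3 ⊗ₖ P ⊗ₖ Id3
  | 4 => Id3 ⊗ₖ Id3 ⊗ₖ Id3 ⊗ₖ Id3 ⊗ₖ P

lemma hprim : IsPrimitiveRoot ω 3 := by
  have := Complex.isPrimitiveRoot_exp 3 (by norm_num)
  convert this using 2
  simp [ω]

lemma hω3 : ω ^ 3 = 1 := hprim.pow_eq_one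

lemma hZX : Z * X = ω • (X * Z) := by
  have h1 : ω * ω ^ 2 = 1 := by linear_combination hω3
  have h2 : ω * ω = ω ^ 2 := by ring
  rw [X, Z, Matrix.mul_fin_three, Matrix.mul_fin_three]
  simp only [Matrix.smul_of, Matrix.smul_cons, Matrix.smul_empty, smul_eq_mul]
  norm_num [h1, h2]

lemma hZX2 : Z * (X * X) = (ω^2) • ((X * X) * Z) := by
  calc Z * (X * X) = (Z * X) * X := by rw [mul_assoc]
  _ = ω • ((X * Z) * X) := by rw [hZX, Matrix.smul_mul]
  _ = ω • (X * (ω • (X * Z))) := by rw [mul_assoc, hZX]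
  _ = (ω^2) • ((X * X) * Z) := by
      rw [Matrix.mul_smul, smul_smul, mul_assoc]; ring_nf

/-- Z-exponent of stabilizer `j` at position `k`. -/
def c : Fin 4 → Fin 5 → ℕ
  | 0 => ![0,0,1,1,0]
  | 1 => ![0,0,0,1,1]
  | 2 => ![1,0,0,0,1]
  | 3 => ![1,1,0,0,0]

/-- Syndrome exponent of the error `X^(a+1)` on qutrit `k` against stabilizer `j`. -/
def eN (a : Fin 2) (k : Fin 5) (j : Fin 4) : ℕ := (c j k * ((a : ℕ) + 1)) % 3

lemma eN_lt (a : Fin 2) (k : Fin 5) (j : Fin 4) : eN a k j < 3 :=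
  Nat.mod_lt _ (by norm_num)

theorem bit_error_syndromes_distinct :
    ∃ ε : Fin 2 → Fin 5 → Fin 4 → ℂ,
      (∀ a k j, (ε a k j) ^ 3 = 1 ∧ S j * E a k = ε a k j • (E a k * S j)) ∧
      Function.Injective (fun p : Fin 2 × Fin 5 => ε p.1 p.2) ∧
      (∀ a k, ε a k ≠ fun _ => 1) := by
  refine ⟨fun a k j => ω ^ eN a k j, fun a k j => ⟨?_, ?_⟩, ?_, ?_⟩
  · rw [← pow_mul, mul_comm, pow_mul, hω3, one_pow]
  · fin_cases a <;> fin_cases k <;> fin_cases j <;>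
      simp [S, E, eN, c, ← Matrix.mul_kronecker_mul, Id3, hZX, hZX2,
        Matrix.smul_kronecker, Matrix.kronecker_smul, smul_smul, mul_assoc, pow_two]
  · have key : ∀ a k a' k', (∀ j, eN a k j = eN a' k' j) →
        ((a, k) : Fin 2 × Fin 5) = (a', k') := by decide
    rintro ⟨a, k⟩ ⟨a', k'⟩ h
    exact key a k a' k' fun j =>
      hprim.pow_inj (eN_lt a k j) (eN_lt a' k' j) (congrFun h j)
  · have key : ∀ (a : Fin 2) (k : Fin 5), ∃ j, eN a k j ≠ 0 := by decide
    intro a k h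
    obtain ⟨j, hj⟩ := key a k
    exact hj (hprim.pow_inj (eN_lt a k j) (by norm_num)
      (by simpa using congrFun h j))
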